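/- Let F be a bijection of the open subsets of ℝ satisfying F(U₁ ∩ U₂) = F(U₁) ∩ F(U₂). Then there exists a bijection u : ℝ → ℝ such that F(U) = u '' U (the image of U under u) for every open set U; moreover u is an open map and continuous. -/

import Mathlib

theorem stmt_18 (F : Set ℝ → Set ℝ)
    (hbij : Set.BijOn F {U : Set ℝ | IsOpen U} {U : Set ℝ | IsOpen U})
    (hcap : ∀ U V : Set ℝ, IsOpen U → IsOpen V → F (U ∩ V) = F U ∩ F V) :
    ∃ u : ℝ → ℝ, Function.Bijective u ∧ (∀ U : Set ℝ, IsOpen U → F U = u '' U) ∧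
      IsOpenMap u ∧ Continuous u := by
  classical
  have hFopen : ∀ U : Set ℝ, IsOpen U → IsOpen (F U) := fun U hU => hbij.mapsTo hU
  have hinj := hbij.injOn
  have hsurj := hbij.surjOn
  -- F is an order isomorphism
  have hmono : ∀ U V : Set ℝ, IsOpen U → IsOpen V → (U ⊆ V ↔ F U ⊆ F V) := by
    intro U V hU hV
    constructor
    · intro h
      have h1 : U ∩ V = U := Set.inter_eq_left.mpr h
      have : F U = F U ∩ F V := by rw [← hcap U V hU hV, h1]
      rw [this]; exact Set.inter_subset_right
    · intro h
      have h1 : F (U ∩ V) = F U := by rw [hcap U V hU hV, Set.inter_eq_left.mpr h]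
      have h2 : U ∩ V = U := hinj (hU.inter hV) hU h1
      exact Set.inter_eq_left.mp h2
  -- F univ = univ
  have hFuniv : F Set.univ = Set.univ := by
    obtain ⟨W, hW, hFW⟩ := hsurj (show (Set.univ : Set ℝ) ∈ {U : Set ℝ | IsOpen U} from (isOpen_univ : IsOpen (Set.univ : Set ℝ)))
    apply Set.eq_univ_of_univ_subset
    have : F W ⊆ F Set.univ := (hmono W Set.univ hW isOpen_univ).mp (Set.subset_univ W)
    rw [hFW] at this; exact this
  have hcomplopen : ∀ x : ℝ, IsOpen ({x}ᶜ : Set ℝ) := fun x => isOpen_compl_singleton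
  have hcomplne : ∀ x : ℝ, ({x}ᶜ : Set ℝ) ≠ Set.univ := by
    intro x h
    have : x ∈ ({x}ᶜ : Set ℝ) := h ▸ Set.mem_univ x
    exact this rfl
  -- any open set containing {x}ᶜ is {x}ᶜ or univ
  have hcoatom : ∀ (x : ℝ) (V : Set ℝ), ({x}ᶜ : Set ℝ) ⊆ V → V = {x}ᶜ ∨ V = Set.univ := by
    intro x V h
    by_cases hx : x ∈ V
    · right
      apply Set.eq_univ_of_forall
      intro z
      by_cases hz : z = x
      · rwa [hz]
      · exact h hz
    · left
      apply Set.Subset.antisymm _ h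
      intro z hz hzx
      exact hx (hzx ▸ hz)
  -- F maps complements of singletons to complements of singletons
  have hcoat : ∀ x : ℝ, ∃ y : ℝ, F ({x}ᶜ) = {y}ᶜ := by
    intro x
    have hWo : IsOpen (F ({x}ᶜ : Set ℝ)) := hFopen _ (hcomplopen x)
    have hWne : F ({x}ᶜ : Set ℝ) ≠ Set.univ := by
      intro h
      have : ({x}ᶜ : Set ℝ) = Set.univ := hinj (hcomplopen x) (show (Set.univ : Set ℝ) ∈ {U : Set ℝ | IsOpen U} from (isOpen_univ : IsOpen (Set.univ : Set ℝ))) (h.trans hFuniv.symm)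
      exact hcomplne x this
    obtain ⟨y, hy⟩ : ∃ y : ℝ, y ∉ F ({x}ᶜ : Set ℝ) := by
      by_contra h
      push_neg at h
      exact hWne (Set.eq_univ_of_forall h)
    refine ⟨y, ?_⟩
    obtain ⟨V, hV, hFV⟩ := hsurj (show ({y}ᶜ : Set ℝ) ∈ {U : Set ℝ | IsOpen U} from hcomplopen y)
    have hsub : F ({x}ᶜ : Set ℝ) ⊆ F V := by
      rw [hFV]; intro z hz hzy; exact hy (hzy ▸ hz)
    have hsub2 : ({x}ᶜ : Set ℝ) ⊆ V := (hmono _ V (hcomplopen x) hV).mpr hsub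
    rcases hcoatom x V hsub2 with h | h
    · rw [← hFV, h]
    · exfalso
      rw [h, hFuniv] at hFV
      exact hcomplne y hFV.symm
  have hsingcompl : ∀ a b : ℝ, ({a}ᶜ : Set ℝ) = {b}ᶜ → a = b := by
    intro a b h
    have := compl_injective h
    exact Set.singleton_injective this
  -- surjectivity on coatoms
  have hcoatsurj : ∀ y : ℝ, ∃ x : ℝ, F ({x}ᶜ) = {y}ᶜ := by
    intro y
    obtain ⟨W, hW, hFW⟩ := hsurj (show ({y}ᶜ : Set ℝ) ∈ {U : Set ℝ | IsOpen U} from hcomplopen y)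
    have hWne : W ≠ Set.univ := by
      intro h
      rw [h, hFuniv] at hFW
      exact hcomplne y hFW.symm
    obtain ⟨x, hx⟩ : ∃ x : ℝ, x ∉ W := by
      by_contra h; push_neg at h; exact hWne (Set.eq_univ_of_forall h)
    have hsub : W ⊆ ({x}ᶜ : Set ℝ) := fun z hz hzx => hx (hzx ▸ hz)
    obtain ⟨z, hz⟩ := hcoat x
    have : F W ⊆ F ({x}ᶜ : Set ℝ) := (hmono W _ hW (hcomplopen x)).mp hsub
    rw [hFW, hz] at this
    have hzy : z = y := by
      have : ({z} : Set ℝ) ⊆ {y} := by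
        intro w hw
        by_contra hwy
        exact (this hwy) hw
      exact (Set.singleton_subset_singleton.mp this)
    exact ⟨x, by rw [hz, hzy]⟩
  set u : ℝ → ℝ := fun x => Classical.choose (hcoat x) with hu_def
  have hu : ∀ x : ℝ, F ({x}ᶜ) = {u x}ᶜ := fun x => Classical.choose_spec (hcoat x)
  set v : ℝ → ℝ := fun y => Classical.choose (hcoatsurj y) with hv_def
  have hv : ∀ y : ℝ, F ({v y}ᶜ) = {y}ᶜ := fun y => Classical.choose_spec (hcoatsurj y)
  have hvu : ∀ x : ℝ, v (u x) = x := by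
    intro x
    have h1 : F ({v (u x)}ᶜ) = F ({x}ᶜ) := by rw [hv, hu]
    have h2 := hinj (hcomplopen _) (hcomplopen _) h1
    exact hsingcompl _ _ h2
  have huv : ∀ y : ℝ, u (v y) = y := by
    intro y
    have h1 : ({u (v y)}ᶜ : Set ℝ) = {y}ᶜ := by rw [← hu, hv]
    exact hsingcompl _ _ h1
  have hubij : Function.Bijective u :=
    Function.bijective_iff_has_inverse.mpr ⟨v, hvu, huv⟩
  -- main lemma
  have hmain : ∀ U : Set ℝ, IsOpen U → F U = u '' U := by
    intro U hU
    ext y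
    have h1 : y ∈ F U ↔ ¬ F U ⊆ ({y}ᶜ : Set ℝ) := by
      constructor
      · intro hy hsub
        exact hsub hy rfl
      · intro hns
        obtain ⟨z, hz1, hz2⟩ := Set.not_subset.mp hns
        have : z = y := by simpa using hz2
        exact this ▸ hz1
    have h2 : F U ⊆ ({y}ᶜ : Set ℝ) ↔ U ⊆ ({v y}ᶜ : Set ℝ) := by
      rw [← hv y]
      exact (hmono U _ hU (hcomplopen _)).symm
    have h3 : ¬ U ⊆ ({v y}ᶜ : Set ℝ) ↔ v y ∈ U := by
      constructor
      · intro hns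
        obtain ⟨z, hz1, hz2⟩ := Set.not_subset.mp hns
        have : z = v y := by simpa using hz2
        exact this ▸ hz1
      · intro hy hsub
        exact hsub hy rfl
    rw [h1, h2, h3]
    constructor
    · intro h
      exact ⟨v y, h, huv y⟩
    · rintro ⟨x, hx, rfl⟩
      rwa [hvu]
  refine ⟨u, hubij, hmain, ?_, ?_⟩
  · intro U hU
    rw [← hmain U hU]
    exact hFopen U hU
  · rw [continuous_def]
    intro V hV
    obtain ⟨W, hW, hFW⟩ := hsurj (show V ∈ {U : Set ℝ | IsOpen U} from hV)
    have : u '' W = V := by rw [← hmain W hW, hFW]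
    have hpre : u ⁻¹' V = W := by
      rw [← this, Set.preimage_image_eq W hubij.injective]
    rw [hpre]
    exact hW
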